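/- arXiv:1305.5805 — 2 statements merged into one kernel-verified Lean document; each statement's English description precedes it below -/
import Mathlib

section
/- Let G be a finite simple graph, H the induced subgraph on a vertex set Y, and x, y ∈ Y two distinct vertices with x ∼⊥ y in G. Let H' be the induced subgraph on Y \ {y}. Then two vertices z₁, z₂ ∈ Y \ {y} lie in the same connected component of H' if and only if they lie in the same connected component of H. -/
def closedNbhd {V : Type*} (G : SimpleGraph V) (x : V) : Set V :=
  {z | z = x ∨ G.Adj x z}

theorem remove_perp_twin_preserves_components {V : Type*} [Fintype V]
    (G : SimpleGraph V) (Y : Set V) (x y : V) (hx : x ∈ Y) (hy : y ∈ Y)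
    (hxy : x ≠ y) (hperp : closedNbhd G x = closedNbhd G y)
    (z₁ z₂ : V) (hz₁ : z₁ ∈ Y \ {y}) (hz₂ : z₂ ∈ Y \ {y}) :
    (G.induce (Y \ {y})).Reachable ⟨z₁, hz₁⟩ ⟨z₂, hz₂⟩ ↔
      (G.induce Y).Reachable ⟨z₁, hz₁.1⟩ ⟨z₂, hz₂.1⟩ := by
  have hxS : x ∈ Y \ {y} := ⟨hx, hxy⟩
  constructor
  · intro h
    have key : ∀ a b : ↥(Y \ {y}), (G.induce (Y \ {y})).Reachable a b →
        (G.induce Y).Reachable ⟨a.1, a.2.1⟩ ⟨b.1, b.2.1⟩ := by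
      intro a b ⟨w⟩
      induction w with
      | nil => exact SimpleGraph.Reachable.refl _
      | cons hadj _ ih =>
        exact SimpleGraph.Reachable.trans (SimpleGraph.Adj.reachable (by exact hadj)) ih
    exact key _ _ h
  · intro h
    classical
    let f : ↥Y → ↥(Y \ {y}) := fun a => if h : (a : V) = y then ⟨x, hxS⟩ else ⟨a, a.2, h⟩
    have hadjx : G.Adj y x := by
      have hxmem : x ∈ closedNbhd G y := hperp ▸ Or.inl rfl
      rcases hxmem with h1 | h1
      · exact absurd h1 hxy
      · exact h1
    have step : ∀ a b : ↥Y, (G.induce Y).Adj a b →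
        (G.induce (Y \ {y})).Reachable (f a) (f b) := by
      intro a b hab
      have hab' : G.Adj (a : V) (b : V) := hab
      by_cases ha : (a : V) = y
      · by_cases hb : (b : V) = y
        · exact absurd (Subtype.ext (ha.trans hb.symm)) hab.ne
        · have hbmem : (b : V) ∈ closedNbhd G x := by
            rw [hperp]; exact Or.inr (ha ▸ hab')
          simp only [f, dif_pos ha, dif_neg hb]
          rcases hbmem with h1 | h1
          · simp only [h1]; exact SimpleGraph.Reachable.refl _
          · exact SimpleGraph.Adj.reachable (by exact h1)
      · by_cases hb : (b : V) = y
        · have hamem : (a : V) ∈ closedNbhd G x := by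
            rw [hperp]; exact Or.inr (hb ▸ hab'.symm)
          simp only [f, dif_neg ha, dif_pos hb]
          rcases hamem with h1 | h1
          · simp only [h1]; exact SimpleGraph.Reachable.refl _
          · exact (SimpleGraph.Adj.reachable (by exact h1)).symm
        · simp only [f, dif_neg ha, dif_neg hb]
          exact SimpleGraph.Adj.reachable (by exact hab')
    have key : ∀ a b : ↥Y, (G.induce Y).Reachable a b →
        (G.induce (Y \ {y})).Reachable (f a) (f b) := by
      intro a b ⟨w⟩
      induction w with
      | nil => exact SimpleGraph.Reachable.refl _
      | cons hadj _ ih => exact (step _ _ hadj).trans ih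
    have := key ⟨z₁, hz₁.1⟩ ⟨z₂, hz₂.1⟩ h
    simpa only [f, dif_neg (show ¬ z₁ = y from hz₁.2), dif_neg (show ¬ z₂ = y from hz₂.2)]
      using this
end

section
/- If z₁ and z₂ are connected by a path in a finite simple graph H that passes through a vertex y, and x ≠ y is a vertex such that every neighbor of y in H is also a neighbor of x, and z₁, z₂ ≠ y, then z₁ and z₂ are connected by a path in H avoiding y. -/
private lemma aux_from_y {V : Type*} (H : SimpleGraph V) (x y : V) (hxy : x ≠ y)
    (hnbr : ∀ w : V, w ≠ x → H.Adj y w → H.Adj x w) :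
    ∀ n (z₂ : V), z₂ ≠ y → ∀ p : H.Walk y z₂, p.length ≤ n →
      ∃ q : H.Walk x z₂, y ∉ q.support := by
  classical
  intro n
  induction n with
  | zero =>
    intro z₂ hz₂ p hl
    cases p with
    | nil => exact absurd rfl hz₂.symm
    | cons h p' => simp [SimpleGraph.Walk.length_cons] at hl
  | succ n ih =>
    intro z₂ hz₂ p hl
    cases p with
    | nil => exact absurd rfl hz₂.symm
    | cons h p' =>
      rename_i b
      have hl' : p'.length ≤ n := by
        simp only [SimpleGraph.Walk.length_cons] at hl
        omega
      by_cases hby : y ∈ p'.support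
      · exact ih z₂ hz₂ (p'.dropUntil y hby)
          (le_trans (SimpleGraph.Walk.length_dropUntil_le p' hby) hl')
      · by_cases hbx : b = x
        · subst hbx
          exact ⟨p', hby⟩
        · refine ⟨SimpleGraph.Walk.cons (hnbr b hbx h) p', ?_⟩
          simp only [SimpleGraph.Walk.support_cons, List.mem_cons]
          rintro (rfl | hyy)
          · exact hxy rfl
          · exact hby hyy

private lemma aux_main {V : Type*} (H : SimpleGraph V) (x y z₂ : V) (hxy : x ≠ y)
    (hz₂ : z₂ ≠ y)
    (hnbr : ∀ w : V, w ≠ x → H.Adj y w → H.Adj x w) :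
    ∀ n (z₁ : V), z₁ ≠ y → ∀ p : H.Walk z₁ z₂, p.length ≤ n → y ∈ p.support →
      ∃ q : H.Walk z₁ z₂, y ∉ q.support := by
  intro n
  induction n with
  | zero =>
    intro z₁ hz₁ p hl hy
    cases p with
    | nil =>
      simp only [SimpleGraph.Walk.support_nil, List.mem_singleton] at hy
      exact absurd hy.symm hz₁
    | cons h p' => simp [SimpleGraph.Walk.length_cons] at hl
  | succ n ih =>
    intro z₁ hz₁ p hl hy
    cases p with
    | nil =>
      simp only [SimpleGraph.Walk.support_nil, List.mem_singleton] at hy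
      exact absurd hy.symm hz₁
    | cons h p' =>
      rename_i c
      by_cases hcy : c = y
      · -- h : H.Adj z₁ c, p' : H.Walk c z₂, with c = y
        have p'' : H.Walk y z₂ := p'.copy hcy rfl
        have hadj : H.Adj z₁ y := hcy ▸ h
        obtain ⟨r, hr⟩ := aux_from_y H x y hxy hnbr p''.length z₂ hz₂ p'' le_rfl
        by_cases hz₁x : z₁ = x
        · subst hz₁x
          exact ⟨r, hr⟩
        · have hadj2 : H.Adj x z₁ := hnbr z₁ hz₁x hadj.symm
          refine ⟨SimpleGraph.Walk.cons hadj2.symm r, ?_⟩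
          simp only [SimpleGraph.Walk.support_cons, List.mem_cons]
          rintro (rfl | hyy)
          · exact hz₁ rfl
          · exact hr hyy
      · have hy' : y ∈ p'.support := by
          simp only [SimpleGraph.Walk.support_cons, List.mem_cons] at hy
          rcases hy with rfl | hy
          · exact absurd rfl hz₁
          · exact hy
        have hl' : p'.length ≤ n := by
          simp only [SimpleGraph.Walk.length_cons] at hl
          omega
        obtain ⟨q', hq'⟩ := ih c hcy p' hl' hy'
        refine ⟨SimpleGraph.Walk.cons h q', ?_⟩
        simp only [SimpleGraph.Walk.support_cons, List.mem_cons]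
        rintro (rfl | hyy)
        · exact hz₁ rfl
        · exact hq' hyy

theorem walk_avoiding_vertex {V : Type*} [Fintype V] (H : SimpleGraph V)
    (x y z₁ z₂ : V) (hxy : x ≠ y) (hz₁ : z₁ ≠ y) (hz₂ : z₂ ≠ y)
    (hnbr : ∀ w : V, w ≠ x → H.Adj y w → H.Adj x w)
    (p : H.Walk z₁ z₂) (hp : y ∈ p.support) :
    ∃ q : H.Walk z₁ z₂, y ∉ q.support := by
  exact aux_main H x y z₂ hxy hz₂ hnbr p.length z₁ hz₁ p le_rfl hp
end
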